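/- There exists a constant C > 0 such that for all r ∈ (0, 1/4]: ∫₀¹ (1 − 4·(1 − r)·s·(1 − s))^{−1/2} ds ≤ C · (1 + log(1/r)). In particular, ∫₀¹ Δ_r(s)^{−1} ds = O(log(1/r)). -/

import Mathlib

/-- Grover gap integral, `p = 1`: there is `C > 0` with
`∫₀¹ Δ_r(s)^{−1} ds ≤ C·(1 + log(1/r))` for all `r ∈ (0, 1/4]`,
where `Δ_r(s) = √(1 − 4(1−r)s(1−s))`. -/
theorem stmt15 :
    ∃ C > 0, ∀ r ∈ Set.Ioc (0 : ℝ) (1 / 4),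
      (∫ s in (0:ℝ)..1, (1 - 4 * (1 - r) * s * (1 - s)) ^ (-(1:ℝ) / 2)) ≤
        C * (1 + Real.log (1 / r)) := by
  refine ⟨2, by norm_num, ?_⟩
  rintro r ⟨hr0, hr4⟩
  set a := Real.sqrt r with ha
  have ha0 : 0 < a := Real.sqrt_pos.mpr hr0
  have ha2 : a ^ 2 = r := Real.sq_sqrt hr0.le
  have har : a ≤ 1 / 2 := by
    have h := Real.sqrt_le_sqrt hr4
    rwa [show (1:ℝ)/4 = (1/2)^2 by norm_num, Real.sqrt_sq (by norm_num : (0:ℝ) ≤ 1/2)] at h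
  have hr1 : r ≤ 1 := le_trans hr4 (by norm_num)
  have hbpos : ∀ s : ℝ, 0 < 1 - 4 * (1 - r) * s * (1 - s) := by
    intro s
    have h : 1 - 4 * (1 - r) * s * (1 - s) = r + (1 - r) * (2*s - 1)^2 := by ring
    rw [h]
    have : 0 ≤ (1 - r) * (2*s - 1)^2 := mul_nonneg (by linarith) (sq_nonneg _)
    linarith
  -- pointwise bound  f ≤ g  where  g s = 2 / (a + |2s-1|)
  have hdenpos : ∀ s : ℝ, 0 < a + |2*s - 1| := fun s =>
    lt_of_lt_of_le ha0 (le_add_of_nonneg_right (abs_nonneg _))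
  have hle : ∀ s ∈ Set.Icc (0:ℝ) 1,
      (1 - 4 * (1 - r) * s * (1 - s)) ^ (-(1:ℝ) / 2) ≤ 2 / (a + |2*s - 1|) := by
    intro s _
    set b := 1 - 4 * (1 - r) * s * (1 - s) with hb
    have hbp : 0 < b := hbpos s
    have hrp : b ^ (-(1:ℝ)/2) = (Real.sqrt b)⁻¹ := by
      rw [neg_div, Real.rpow_neg hbp.le, ← Real.sqrt_eq_rpow]
    rw [hrp]
    have hkey : (a + |2*s - 1|) ^ 2 ≤ 4 * b := by
      have habs : |2*s - 1| ^ 2 = (2*s - 1)^2 := sq_abs _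
      have hAM : 2 * a * |2*s - 1| ≤ a^2 + |2*s-1|^2 := two_mul_le_add_sq a _
      have hb' : b = r + (1 - r) * (2*s - 1)^2 := by rw [hb]; ring
      have h34 : (3:ℝ)/4 ≤ 1 - r := by linarith
      nlinarith [sq_nonneg (2*s-1), abs_nonneg (2*s-1)]
    have h2 : a + |2*s - 1| ≤ 2 * Real.sqrt b := by
      have h := Real.sqrt_le_sqrt hkey
      rw [Real.sqrt_sq (by positivity : (0:ℝ) ≤ a + |2*s-1|),
        show (4:ℝ) * b = (2*Real.sqrt b)^2 by
          rw [mul_pow, Real.sq_sqrt hbp.le]; ring,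
        Real.sqrt_sq (by positivity)] at h
      exact h
    have hsb : 0 < Real.sqrt b := Real.sqrt_pos.mpr hbp
    rw [inv_eq_one_div, div_le_div_iff₀ hsb (hdenpos s)]
    linarith
  -- integrability
  have hfc : ContinuousOn (fun s : ℝ => (1 - 4 * (1 - r) * s * (1 - s)) ^ (-(1:ℝ) / 2))
      (Set.uIcc (0:ℝ) 1) := by
    apply ContinuousOn.rpow_const
    · fun_prop
    · intro x _
      exact Or.inl (ne_of_gt (hbpos x))
  have hgc : Continuous (fun s : ℝ => 2 / (a + |2*s - 1|)) := by
    apply Continuous.div continuous_const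
    · fun_prop
    · intro x; exact ne_of_gt (hdenpos x)
  have hfint : IntervalIntegrable (fun s : ℝ => (1 - 4 * (1 - r) * s * (1 - s)) ^ (-(1:ℝ) / 2))
      MeasureTheory.volume 0 1 := hfc.intervalIntegrable
  have hgint : IntervalIntegrable (fun s : ℝ => 2 / (a + |2*s - 1|))
      MeasureTheory.volume 0 1 := hgc.intervalIntegrable 0 1
  have hmono := intervalIntegral.integral_mono_on (by norm_num : (0:ℝ) ≤ 1) hfint hgint hle
  -- compute the g-integral
  have hI1 : (∫ s in (0:ℝ)..(1/2), 2 / (a + |2*s - 1|)) = Real.log (a+1) - Real.log a := by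
    have hcg : ∀ s ∈ Set.uIcc (0:ℝ) (1/2), 2 / (a + |2*s - 1|) = 2 / (a + 1 - 2*s) := by
      intro s hs
      rw [Set.uIcc_of_le (by norm_num : (0:ℝ) ≤ 1/2)] at hs
      rw [abs_of_nonpos (by linarith [hs.2] : 2*s - 1 ≤ 0)]
      ring_nf
    rw [intervalIntegral.integral_congr hcg]
    have hderiv : ∀ s ∈ Set.uIcc (0:ℝ) (1/2),
        HasDerivAt (fun t : ℝ => -Real.log (a + 1 - 2*t)) (2 / (a + 1 - 2*s)) s := by
      intro s hs
      rw [Set.uIcc_of_le (by norm_num : (0:ℝ) ≤ 1/2)] at hs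
      have hpos : 0 < a + 1 - 2*s := by linarith [hs.2]
      have h1 : HasDerivAt (fun t : ℝ => a + 1 - 2*t) (-2) s := by
        simpa using ((hasDerivAt_id s).const_mul (2:ℝ)).const_sub (a+1)
      have h2 := (Real.hasDerivAt_log (ne_of_gt hpos)).comp s h1
      have h3 := h2.neg
      exact h3.congr_deriv (by ring)
    have := intervalIntegral.integral_eq_sub_of_hasDerivAt hderiv
      (by
        apply ContinuousOn.intervalIntegrable
        apply ContinuousOn.div continuousOn_const (by fun_prop)
        intro x hx
        rw [Set.uIcc_of_le (by norm_num : (0:ℝ) ≤ 1/2)] at hx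
        have : 0 < a + 1 - 2*x := by linarith [hx.2]
        exact ne_of_gt this)
    rw [this]
    rw [show a + 1 - 2*(1/2 : ℝ) = a by ring, show a + 1 - 2*(0:ℝ) = a + 1 by ring]
    ring
  have hI2 : (∫ s in (1/2:ℝ)..1, 2 / (a + |2*s - 1|)) = Real.log (a+1) - Real.log a := by
    have hcg : ∀ s ∈ Set.uIcc (1/2:ℝ) 1, 2 / (a + |2*s - 1|) = 2 / (a + 2*s - 1) := by
      intro s hs
      rw [Set.uIcc_of_le (by norm_num : (1/2:ℝ) ≤ 1)] at hs
      rw [abs_of_nonneg (by linarith [hs.1] : (0:ℝ) ≤ 2*s - 1)]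
      ring_nf
    rw [intervalIntegral.integral_congr hcg]
    have hderiv : ∀ s ∈ Set.uIcc (1/2:ℝ) 1,
        HasDerivAt (fun t : ℝ => Real.log (a + 2*t - 1)) (2 / (a + 2*s - 1)) s := by
      intro s hs
      rw [Set.uIcc_of_le (by norm_num : (1/2:ℝ) ≤ 1)] at hs
      have hpos : 0 < a + 2*s - 1 := by linarith [hs.1]
      have h1 : HasDerivAt (fun t : ℝ => a + 2*t - 1) (2:ℝ) s := by
        simpa using (((hasDerivAt_id s).const_mul (2:ℝ)).const_add a).sub_const 1
      have h2 := (Real.hasDerivAt_log (ne_of_gt hpos)).comp s h1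
      exact h2.congr_deriv (by ring)
    have := intervalIntegral.integral_eq_sub_of_hasDerivAt hderiv
      (by
        apply ContinuousOn.intervalIntegrable
        apply ContinuousOn.div continuousOn_const (by fun_prop)
        intro x hx
        rw [Set.uIcc_of_le (by norm_num : (1/2:ℝ) ≤ 1)] at hx
        have : 0 < a + 2*x - 1 := by linarith [hx.1]
        exact ne_of_gt this)
    rw [this]
    rw [show a + 2*(1:ℝ) - 1 = a + 1 by ring, show a + 2*(1/2:ℝ) - 1 = a by ring]
  have hsplit : (∫ s in (0:ℝ)..1, 2 / (a + |2*s - 1|))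
      = 2 * (Real.log (a+1) - Real.log a) := by
    rw [← intervalIntegral.integral_add_adjacent_intervals
      (hgc.intervalIntegrable 0 (1/2)) (hgc.intervalIntegrable (1/2) 1), hI1, hI2]
    ring
  -- final arithmetic
  have hlog2 : Real.log (a + 1) ≤ 1 := by
    calc Real.log (a+1) ≤ (a+1) - 1 := Real.log_le_sub_one_of_pos (by linarith)
    _ ≤ 1 := by linarith
  have hloga : Real.log (1/r) = -2 * Real.log a := by
    rw [one_div, Real.log_inv, ← ha2, Real.log_pow]
    push_cast; ring
  have hlogr_nonneg : 0 ≤ Real.log (1/r) := by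
    apply Real.log_nonneg
    rw [le_div_iff₀ hr0]; linarith
  calc (∫ s in (0:ℝ)..1, (1 - 4 * (1 - r) * s * (1 - s)) ^ (-(1:ℝ) / 2))
      ≤ (∫ s in (0:ℝ)..1, 2 / (a + |2*s - 1|)) := hmono
    _ = 2 * (Real.log (a+1) - Real.log a) := hsplit
    _ = 2 * Real.log (a+1) + Real.log (1/r) := by rw [hloga]; ring
    _ ≤ 2 * 1 + 2 * Real.log (1/r) := by linarith
    _ = 2 * (1 + Real.log (1/r)) := by ring
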